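/- arXiv:1208.5959 — 2 statements merged into one kernel-verified Lean document; each statement's English description precedes it below -/
import Mathlib

section
/- Let $\phi$ be a compactly supported MRA scaling function with $\mathrm{supp}(\phi) = [0,a]$ and associated wavelet $\psi$ with $\mathrm{supp}(\psi) = [0,a]$. If $R \in \mathbb{N}$ and $0 \le k \le (2^R - 1)\lceil a \rceil$, then $\phi_{R,k} = 2^{R/2}\phi(2^R \cdot - k)$ lies in $V_0^{(a)} \oplus W_0^{(a)} \oplus \cdots \oplus W_{R-1}^{(a)}$, where $V_0^{(a)}$ and $W_j^{(a)}$ are the spans of those scaling functions and wavelets whose supports intersect $[0, \lceil a \rceil]$ nontrivially. -/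
open Real MeasureTheory
open scoped InnerProductSpace

lemma mem_span_of_inner_eq_zero {E : Type*} [NormedAddCommGroup E]
    [InnerProductSpace ℂ E] [CompleteSpace E]
    (S T : Set E) (hTS : T ⊆ S) (hTfin : T.Finite)
    (horthoST : ∀ u ∈ S \ T, ∀ v ∈ T, ⟪u, v⟫_ℂ = 0)
    (f : E) (hf : f ∈ (Submodule.span ℂ S).topologicalClosure)
    (hvanish : ∀ u ∈ S \ T, ⟪u, f⟫_ℂ = 0) :
    f ∈ Submodule.span ℂ T := by
  set K := Submodule.span ℂ T with hK
  haveI : FiniteDimensional ℂ K := FiniteDimensional.span_of_finite ℂ hTfin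
  set p : E := (K.orthogonalProjection f : E) with hp
  have hpK : p ∈ K := (K.orthogonalProjection f).2
  set g : E := f - p with hg
  have hginker : g ∈ Kᗮ := by
    have h := K.sub_starProjection_mem_orthogonal f
    rwa [Submodule.starProjection_apply] at h
  have hSg : ∀ u ∈ S, ⟪u, g⟫_ℂ = 0 := by
    intro u hu
    by_cases hT : u ∈ T
    · exact (Submodule.mem_orthogonal K g).1 hginker u (Submodule.subset_span hT)
    · have h1 : ⟪u, f⟫_ℂ = 0 := hvanish u ⟨hu, hT⟩
      have h2 : ⟪u, p⟫_ℂ = 0 := by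
        refine Submodule.span_induction (p := fun x _ => ⟪u, x⟫_ℂ = 0) ?_ ?_ ?_ ?_ hpK
        · intro v hv; exact horthoST u ⟨hu, hT⟩ v hv
        · simp
        · intro x y _ _ hx hy; rw [inner_add_right, hx, hy, add_zero]
        · intro c x _ hx; rw [inner_smul_right, hx, mul_zero]
      rw [hg, inner_sub_right, h1, h2, sub_zero]
  have hspang : ∀ v ∈ Submodule.span ℂ S, ⟪v, g⟫_ℂ = 0 := by
    intro v hv
    refine Submodule.span_induction (p := fun x _ => ⟪x, g⟫_ℂ = 0) ?_ ?_ ?_ ?_ hv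
    · exact hSg
    · simp
    · intro x y _ _ hx hy; rw [inner_add_left, hx, hy, add_zero]
    · intro c x _ hx; rw [inner_smul_left, hx, mul_zero]
  have hgcl : g ∈ (Submodule.span ℂ S).topologicalClosure := by
    refine Submodule.sub_mem _ hf ?_
    exact Submodule.le_topologicalClosure _ (Submodule.span_mono hTS hpK)
  have hclg : ∀ v ∈ (Submodule.span ℂ S).topologicalClosure, ⟪v, g⟫_ℂ = 0 := by
    intro v hv
    have hC : IsClosed {x : E | ⟪x, g⟫_ℂ = 0} :=
      isClosed_eq (Continuous.inner continuous_id continuous_const) continuous_const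
    exact closure_minimal
      (fun x hx => hspang x hx : (Submodule.span ℂ S : Set E) ⊆ {x | ⟪x, g⟫_ℂ = 0}) hC hv
  have hg0 : g = 0 := inner_self_eq_zero.1 (hclg g hgcl)
  have : f = p := by rw [← sub_eq_zero]; exact hg0
  rw [this]; exact hpK

lemma inner_zero_of_reps (u v : Lp ℂ 2 (volume : Measure ℝ)) (gu gv : ℝ → ℂ)
    (hu : (u : ℝ → ℂ) =ᵐ[volume] gu) (hv : (v : ℝ → ℂ) =ᵐ[volume] gv)
    (c : ℝ) (h : ∀ x, x ≠ c → gu x = 0 ∨ gv x = 0) :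
    ⟪u, v⟫_ℂ = 0 := by
  rw [MeasureTheory.L2.inner_def]
  have hc : {x : ℝ | x ≠ c} ∈ ae (volume : Measure ℝ) := by
    rw [mem_ae_iff]
    have : {x : ℝ | x ≠ c}ᶜ = {c} := by ext x; simp
    rw [this]; exact measure_singleton c
  have hz : (fun x => ⟪u x, v x⟫_ℂ) =ᵐ[volume] 0 := by
    filter_upwards [hu, hv, hc] with x hx1 hx2 hx3
    rcases h x hx3 with h0 | h0 <;>
      simp [RCLike.inner_apply, hx1, hx2, h0]
  rw [integral_congr_ae hz]
  simp

/-- If `0 ≤ k ≤ (2^R - 1)⌈a⌉`, the fine-scale scaling function `φ_{R,k}` lies in the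
finite-dimensional space `V₀⁽ᵃ⁾ ⊕ W₀⁽ᵃ⁾ ⊕ ⋯ ⊕ W_{R-1}⁽ᵃ⁾` spanned by those coarse
scaling functions and wavelets whose supports meet `[0, ⌈a⌉]`. -/
theorem stmt_9 (a : ℝ) (ha : 1 ≤ a) (φ ψ : ℝ → ℂ)
    (hφsupp : ∀ x : ℝ, x ∉ Set.Icc 0 a → φ x = 0)
    (hψsupp : ∀ x : ℝ, x ∉ Set.Icc 0 a → ψ x = 0)
    (Φ : ℤ → Lp ℂ 2 (volume : Measure ℝ))
    (Ψ : ℕ → ℤ → Lp ℂ 2 (volume : Measure ℝ))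
    (hΦ : ∀ k : ℤ, (Φ k : ℝ → ℂ) =ᵐ[volume] fun x => φ (x - (k : ℝ)))
    (hΨ : ∀ (j : ℕ) (k : ℤ), (Ψ j k : ℝ → ℂ) =ᵐ[volume]
      fun x => (Real.sqrt ((2:ℝ)^j) : ℂ) * ψ ((2:ℝ)^j * x - (k : ℝ)))
    (horth : Orthonormal ℂ (Sum.elim Φ (fun p : ℕ × ℤ => Ψ p.1 p.2)))
    (R : ℕ) (k : ℤ) (hk : 0 ≤ k ∧ k ≤ (2^R - 1) * ⌈a⌉)
    (f : Lp ℂ 2 (volume : Measure ℝ))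
    (hf : (f : ℝ → ℂ) =ᵐ[volume] fun x => (Real.sqrt ((2:ℝ)^R) : ℂ) * φ ((2:ℝ)^R * x - (k : ℝ)))
    (hMRA : f ∈ (Submodule.span ℂ
      (Set.range Φ ∪ ⋃ j ∈ Set.Iio R, Set.range (Ψ j))).topologicalClosure) :
    f ∈ Submodule.span ℂ
      ((Φ '' {l : ℤ | |l| ≤ ⌈a⌉ - 1}) ∪
        ⋃ j ∈ Set.Iio R, Ψ j '' {l : ℤ | -⌈a⌉ + 1 ≤ l ∧ l ≤ 2^j * ⌈a⌉ - 1}) := by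
  obtain ⟨hk0, hk2⟩ := hk
  set m : ℤ := ⌈a⌉ with hm
  have ham : a ≤ (m:ℝ) := Int.le_ceil a
  have h1m : (1:ℝ) ≤ (m:ℝ) := le_trans ha ham
  have hk0' : (0:ℝ) ≤ (k:ℝ) := by exact_mod_cast hk0
  have h2R : (0:ℝ) < (2:ℝ)^R := by positivity
  have hka : (k:ℝ) + a ≤ (2:ℝ)^R * (m:ℝ) := by
    have h : (k:ℝ) ≤ ((2:ℝ)^R - 1) * (m:ℝ) := by exact_mod_cast hk2
    nlinarith
  set S : Set (Lp ℂ 2 (volume : Measure ℝ)) :=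
    Set.range Φ ∪ ⋃ j ∈ Set.Iio R, Set.range (Ψ j) with hS
  set T : Set (Lp ℂ 2 (volume : Measure ℝ)) :=
    (Φ '' {l : ℤ | |l| ≤ m - 1}) ∪
      ⋃ j ∈ Set.Iio R, Ψ j '' {l : ℤ | -m + 1 ≤ l ∧ l ≤ 2^j * m - 1} with hT
  have hTS : T ⊆ S := by
    apply Set.union_subset_union
    · exact Set.image_subset_range Φ _
    · exact Set.iUnion₂_mono fun j _ => Set.image_subset_range _ _
  have hTfin : T.Finite := by
    apply Set.Finite.union
    · apply Set.Finite.image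
      apply (Set.finite_Icc (-(m-1)) (m-1)).subset
      intro l hl
      simp only [Set.mem_setOf_eq, abs_le] at hl
      exact Set.mem_Icc.2 ⟨hl.1, hl.2⟩
    · apply Set.Finite.biUnion (Set.finite_Iio R)
      intro j _
      apply Set.Finite.image
      apply (Set.finite_Icc (-m+1) (2^j*m-1)).subset
      intro l hl
      exact Set.mem_Icc.2 ⟨hl.1, hl.2⟩
  have hrep : ∀ w ∈ S, ∃ i : ℤ ⊕ (ℕ × ℤ),
      Sum.elim Φ (fun p : ℕ × ℤ => Ψ p.1 p.2) i = w := by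
    intro w hw
    rcases hw with ⟨l, rfl⟩ | hw
    · exact ⟨Sum.inl l, rfl⟩
    · simp only [Set.mem_iUnion] at hw
      obtain ⟨j, hj, l, rfl⟩ := hw
      exact ⟨Sum.inr (j, l), rfl⟩
  have horthoST : ∀ u ∈ S \ T, ∀ v ∈ T, ⟪u, v⟫_ℂ = 0 := by
    intro u hu v hv
    obtain ⟨i, hi⟩ := hrep u hu.1
    obtain ⟨i', hi'⟩ := hrep v (hTS hv)
    have hne : i ≠ i' := by
      rintro rfl
      exact hu.2 (by rw [hi.symm.trans hi']; exact hv)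
    rw [← hi, ← hi']
    exact horth.2 hne
  refine mem_span_of_inner_eq_zero S T hTS hTfin horthoST f hMRA ?_
  intro u hu
  obtain ⟨hu1, hu2⟩ := hu
  rcases hu1 with ⟨l, rfl⟩ | hw
  · -- Φ l case
    have hlbad : ¬ |l| ≤ m - 1 := fun hgood => hu2 (Or.inl ⟨l, hgood, rfl⟩)
    have hcase : m ≤ l ∨ l ≤ -m := by rw [abs_le] at hlbad; omega
    rcases hcase with hl | hl
    · have hlm : (m:ℝ) ≤ (l:ℝ) := by exact_mod_cast hl
      refine inner_zero_of_reps _ _ _ _ (hΦ l) hf (l:ℝ) ?_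
      intro x hx
      try dsimp only
      rcases lt_or_gt_of_ne hx with hlt | hgt
      · left
        apply hφsupp
        simp only [Set.mem_Icc, not_and, not_le]
        intro h0; linarith
      · right
        rw [hφsupp _ ?_, mul_zero]
        simp only [Set.mem_Icc, not_and, not_le]
        intro h0
        have hxm : (m:ℝ) < x := lt_of_le_of_lt hlm hgt
        nlinarith [mul_lt_mul_of_pos_left hxm h2R]
    · have hlm : (l:ℝ) ≤ -(m:ℝ) := by exact_mod_cast hl
      refine inner_zero_of_reps _ _ _ _ (hΦ l) hf ((l:ℝ) + a) ?_
      intro x hx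
      try dsimp only
      rcases lt_or_gt_of_ne hx with hlt | hgt
      · right
        have hx0 : x < 0 := by linarith
        rw [hφsupp _ ?_, mul_zero]
        simp only [Set.mem_Icc, not_and, not_le]
        intro h0
        nlinarith [mul_neg_of_pos_of_neg h2R hx0]
      · left
        apply hφsupp
        simp only [Set.mem_Icc, not_and, not_le]
        intro h0; linarith
  · -- Ψ j l case
    simp only [Set.mem_iUnion] at hw
    obtain ⟨j, hj, l, rfl⟩ := hw
    have hlbad : ¬(-m + 1 ≤ l ∧ l ≤ 2^j * m - 1) := by
      intro hgood
      exact hu2 (Or.inr (Set.mem_biUnion hj ⟨l, hgood, rfl⟩))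
    have h2j : (0:ℝ) < (2:ℝ)^j := by positivity
    have hcase : l ≤ -m ∨ 2^j * m ≤ l := by
      push_neg at hlbad
      by_cases h : -m + 1 ≤ l
      · right; have := hlbad h; omega
      · left; omega
    rcases hcase with hl | hl
    · have hlm : (l:ℝ) ≤ -(m:ℝ) := by exact_mod_cast hl
      refine inner_zero_of_reps _ _ _ _ (hΨ j l) hf (((l:ℝ) + a)/(2:ℝ)^j) ?_
      intro x hx
      try dsimp only
      rcases lt_or_gt_of_ne hx with hlt | hgt
      · right
        have hx0 : x < 0 := by
          have hnum : (l:ℝ) + a ≤ 0 := by linarith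
          have : ((l:ℝ)+a)/(2:ℝ)^j ≤ 0 := div_nonpos_iff.2 (Or.inr ⟨hnum, h2j.le⟩)
          linarith
        rw [hφsupp _ ?_, mul_zero]
        simp only [Set.mem_Icc, not_and, not_le]
        intro h0
        nlinarith [mul_neg_of_pos_of_neg h2R hx0]
      · left
        have hx' : (l:ℝ) + a < (2:ℝ)^j * x := by
          rw [div_lt_iff₀ h2j] at hgt
          linarith
        rw [hψsupp _ ?_, mul_zero]
        simp only [Set.mem_Icc, not_and, not_le]
        intro h0; linarith
    · have hlm : (2:ℝ)^j * (m:ℝ) ≤ (l:ℝ) := by exact_mod_cast hl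
      refine inner_zero_of_reps _ _ _ _ (hΨ j l) hf ((l:ℝ)/(2:ℝ)^j) ?_
      intro x hx
      try dsimp only
      rcases lt_or_gt_of_ne hx with hlt | hgt
      · left
        have hx' : (2:ℝ)^j * x < (l:ℝ) := by
          rw [lt_div_iff₀ h2j] at hlt
          linarith
        rw [hψsupp _ ?_, mul_zero]
        simp only [Set.mem_Icc, not_and, not_le]
        intro h0; linarith
      · right
        have hxm : (m:ℝ) < x := by
          have h1 : (m:ℝ) ≤ (l:ℝ)/(2:ℝ)^j := (le_div_iff₀ h2j).2 (by linarith)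
          linarith
        rw [hφsupp _ ?_, mul_zero]
        simp only [Set.mem_Icc, not_and, not_le]
        intro h0
        nlinarith [mul_lt_mul_of_pos_left hxm h2R]
end

section
/- Fix $M_1 \in \mathbb{N}$, $\epsilon_1, \epsilon_2 > 0$ and $C > 1$, and let $M_2 = \lceil C M_1 \epsilon_1/\epsilon_2 \rceil$. Then $\sum_{l > M_2/2} \; \frac{2 \epsilon_1 \epsilon_2 M_1}{\pi^2 |\epsilon_1 M_1/2 - \epsilon_2 l|^2} \le \frac{4}{\pi^2 (C-1)}$. -/
open Real

private lemma tele_sum (v : ℤ → ℝ) (m : ℤ) : ∀ M : ℤ, m ≤ M →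
    ∑ l ∈ Finset.Icc m M, (v l - v (l + 1)) = v m - v (M + 1) := by
  refine Int.le_induction ?_ ?_
  · simp
  · intro n hn ih
    have hins : Finset.Icc m (n + 1) = insert (n + 1) (Finset.Icc m n) := by
      ext x; simp only [Finset.mem_Icc, Finset.mem_insert]; omega
    rw [hins, Finset.sum_insert (by simp), ih]; ring

/-- Tail estimate controlling the energy leakage between truncated Fourier sampling
spaces of different densities. -/
theorem stmt_14 (M₁ : ℕ) (ε₁ ε₂ C : ℝ) (hε₁ : 0 < ε₁) (hε₂ : 0 < ε₂) (hC : 1 < C)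
    (M₂ : ℤ) (hM₂ : M₂ = ⌈C * M₁ * ε₁ / ε₂⌉) :
    ∑' l : {l : ℤ // (M₂ : ℝ) / 2 < (l : ℝ)},
        2 * ε₁ * ε₂ * M₁ / (π^2 * |ε₁ * M₁ / 2 - ε₂ * ((l : ℤ) : ℝ)|^2)
      ≤ 4 / (π^2 * (C - 1)) := by
  have hπ : (0:ℝ) < π := Real.pi_pos
  have hπ2 : (0:ℝ) < π^2 := by positivity
  have hπC : (0:ℝ) < π^2 * (C - 1) := mul_pos hπ2 (by linarith)
  have hc0 : (0:ℝ) ≤ 4 / (π^2 * (C - 1)) := le_of_lt (div_pos (by norm_num) hπC)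
  rcases Nat.eq_zero_or_pos M₁ with h0 | hM₁
  · subst h0
    simp only [Nat.cast_zero, mul_zero, zero_div, tsum_zero]
    exact hc0
  have hM : (0:ℝ) < (M₁:ℝ) := by exact_mod_cast hM₁
  set b : ℝ := ε₁ * (M₁:ℝ) / (2 * ε₂) with hbdef
  have hb : 0 < b := by positivity
  -- term function on ℤ
  set F : ℤ → ℝ := fun l =>
      2 * ε₁ * ε₂ * M₁ / (π^2 * |ε₁ * M₁ / 2 - ε₂ * (l:ℝ)|^2) with hFdef
  have hFnonneg : ∀ l : ℤ, 0 ≤ F l := by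
    intro l
    apply div_nonneg (by positivity) (by positivity)
  have hFeq : ∀ l : ℤ, F l = 4 * b / (π^2 * ((l:ℝ) - b)^2) := by
    intro l
    have h1 : ε₁ * (M₁:ℝ) / 2 - ε₂ * (l:ℝ) = ε₂ * (b - (l:ℝ)) := by
      rw [hbdef]; field_simp
    rw [hFdef]
    simp only [h1]
    rw [sq_abs, mul_pow]
    have h2 : 2 * ε₁ * ε₂ * (M₁:ℝ) = ε₂^2 * (4 * b) := by
      rw [hbdef]; field_simp; ring
    have h3 : π^2 * (ε₂^2 * (b - (l:ℝ))^2) = ε₂^2 * (π^2 * ((l:ℝ) - b)^2) := by ring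
    rw [h2, h3, mul_div_mul_left _ _ (by positivity : (ε₂:ℝ)^2 ≠ 0)]
  have hM₂ge : 2 * C * b ≤ (M₂:ℝ) := by
    have h1 : C * (M₁:ℝ) * ε₁ / ε₂ = 2 * C * b := by rw [hbdef]; field_simp
    rw [hM₂, ← h1]
    exact Int.le_ceil _
  set v : ℤ → ℝ := fun l => 1 / ((l:ℝ) - 1/2 - b) with hvdef
  -- basic positivity of denominator for admissible l
  have hlow : ∀ l : ℤ, (M₂:ℝ) < 2 * (l:ℝ) → (C - 1) * b ≤ (l:ℝ) - 1/2 - b := by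
    intro l hl
    have hZ : M₂ < 2 * l := by exact_mod_cast hl
    have hZ' : (M₂:ℝ) + 1 ≤ 2 * (l:ℝ) := by exact_mod_cast hZ
    nlinarith
  have hCb : 0 < (C - 1) * b := by nlinarith
  have key : ∀ l : ℤ, (M₂:ℝ) < 2 * (l:ℝ) →
      F l ≤ (4 * b / π^2) * (v l - v (l + 1)) := by
    intro l hl
    have hd1 : 0 < (l:ℝ) - 1/2 - b := lt_of_lt_of_le hCb (hlow l hl)
    have hd2 : 0 < (l:ℝ) + 1/2 - b := by linarith
    have hveq : v l - v (l + 1) = 1 / (((l:ℝ) - 1/2 - b) * ((l:ℝ) + 1/2 - b)) := by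
      rw [hvdef]
      push_cast
      rw [div_sub_div _ _ (ne_of_gt hd1) (by linarith)]
      ring_nf
    rw [hFeq l, hveq]
    have hprod : 0 < ((l:ℝ) - 1/2 - b) * ((l:ℝ) + 1/2 - b) := mul_pos hd1 hd2
    have hle : ((l:ℝ) - 1/2 - b) * ((l:ℝ) + 1/2 - b) ≤ ((l:ℝ) - b)^2 := by nlinarith
    calc 4 * b / (π^2 * ((l:ℝ) - b)^2)
        ≤ 4 * b / (π^2 * (((l:ℝ) - 1/2 - b) * ((l:ℝ) + 1/2 - b))) := by
          apply div_le_div_of_nonneg_left (by positivity) (by positivity)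
          nlinarith
      _ = (4 * b / π^2) * (1 / (((l:ℝ) - 1/2 - b) * ((l:ℝ) + 1/2 - b))) := by
          field_simp
  -- finite sum bound over a finset of admissible integers
  have hfin : ∀ t : Finset ℤ, (∀ l ∈ t, (M₂:ℝ) < 2 * (l:ℝ)) →
      ∑ l ∈ t, F l ≤ 4 / (π^2 * (C - 1)) := by
    intro t ht
    rcases t.eq_empty_or_nonempty with rfl | hne
    · simpa using hc0
    set m := t.min' hne with hm
    set M := t.max' hne with hM'
    have hmem : m ∈ t := t.min'_mem hne
    have hmM : m ≤ M := t.min'_le _ (t.max'_mem hne)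
    have hsub : t ⊆ Finset.Icc m M := by
      intro x hx
      simp only [Finset.mem_Icc]
      exact ⟨t.min'_le x hx, t.le_max' x hx⟩
    have hstep1 : ∑ l ∈ t, F l ≤ ∑ l ∈ Finset.Icc m M, F l :=
      Finset.sum_le_sum_of_subset_of_nonneg hsub (fun i _ _ => hFnonneg i)
    have hIccAdm : ∀ l ∈ Finset.Icc m M, (M₂:ℝ) < 2 * (l:ℝ) := by
      intro l hl
      simp only [Finset.mem_Icc] at hl
      have h1 := ht m hmem
      have h2 : (m:ℝ) ≤ (l:ℝ) := by exact_mod_cast hl.1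
      linarith
    have hstep2 : ∑ l ∈ Finset.Icc m M, F l
        ≤ ∑ l ∈ Finset.Icc m M, (4 * b / π^2) * (v l - v (l + 1)) :=
      Finset.sum_le_sum (fun l hl => key l (hIccAdm l hl))
    have hstep3 : ∑ l ∈ Finset.Icc m M, (4 * b / π^2) * (v l - v (l + 1))
        = (4 * b / π^2) * (v m - v (M + 1)) := by
      rw [← Finset.mul_sum, tele_sum v m M hmM]
    have hvM : 0 ≤ v (M + 1) := by
      have hd : 0 < (m:ℝ) - 1/2 - b := lt_of_lt_of_le hCb (hlow m (ht m hmem))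
      have : (m:ℝ) ≤ (M:ℝ) := by exact_mod_cast hmM
      have hd2 : 0 < ((M:ℤ) + 1 : ℤ) - 1/2 - b := by push_cast; linarith
      rw [hvdef]
      positivity
    have hvm : v m ≤ 1 / ((C - 1) * b) := by
      rw [hvdef]
      exact one_div_le_one_div_of_le hCb (hlow m (ht m hmem))
    have hfinal : (4 * b / π^2) * (1 / ((C - 1) * b)) = 4 / (π^2 * (C - 1)) := by
      rw [div_mul_eq_mul_div, mul_one_div, div_div]
      have h3 : (C - 1) * b * π ^ 2 = π ^ 2 * (C - 1) * b := by ring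
      rw [h3, mul_div_mul_right _ _ (ne_of_gt hb)]
    calc ∑ l ∈ t, F l ≤ (4 * b / π^2) * (v m - v (M + 1)) := by
          rw [← hstep3]; exact le_trans hstep1 hstep2
      _ ≤ (4 * b / π^2) * v m := by
          apply mul_le_mul_of_nonneg_left (by linarith) (by positivity)
      _ ≤ (4 * b / π^2) * (1 / ((C - 1) * b)) := by
          apply mul_le_mul_of_nonneg_left hvm (by positivity)
      _ = 4 / (π^2 * (C - 1)) := hfinal
  -- pass from the tsum over the subtype to finite sums
  apply tsum_le_of_sum_le' hc0
  intro s
  classical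
  have himg : ∑ l ∈ Finset.image Subtype.val s, F l = ∑ x ∈ s, F x.val :=
    Finset.sum_image (fun x _ y _ h => Subtype.ext h)
  have hadm : ∀ l ∈ Finset.image Subtype.val s, (M₂:ℝ) < 2 * (l:ℝ) := by
    intro l hl
    simp only [Finset.mem_image] at hl
    obtain ⟨x, _, rfl⟩ := hl
    have h2 := x.2
    linarith
  calc ∑ x ∈ s, F x.val = ∑ l ∈ Finset.image Subtype.val s, F l := himg.symm
    _ ≤ 4 / (π^2 * (C - 1)) := hfin _ hadm
end
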